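/- With g_{-1}(p) = (1/q)·((1-2pq)/(1 - ln(q)·√(2/p)·(1 - √(p/2))))^(√(p/2)) and q = 1-p, one has ln g_{-1}(p) = -(5/3)p² + O(p^(5/2)) as p → 0⁺; in particular g_{-1}(p) < 1 for all sufficiently small p > 0. -/

import Mathlib

open Asymptotics Filter


lemma log_taylor2 {x : ℝ} (h0 : 0 ≤ x) (h1 : x ≤ 1/2) :
    |Real.log (1 - x) + (x + x^2/2)| ≤ 2 * x^3 := by
  have hx : |x| < 1 := by rw [abs_of_nonneg h0]; linarith
  have h := Real.abs_log_sub_add_sum_range_le hx 2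
  rw [Finset.sum_range_succ, Finset.sum_range_succ, Finset.sum_range_zero] at h
  rw [abs_of_nonneg h0] at h
  push_cast at h
  norm_num at h
  have h2 : x^3/(1-x) ≤ 2*x^3 := by
    rw [div_le_iff₀ (by linarith)]
    nlinarith [pow_nonneg h0 3]
  calc |Real.log (1 - x) + (x + x^2/2)| = |x + x^2/2 + Real.log (1-x)| := by
        congr 1; ring
    _ ≤ x^3/(1-x) := h
    _ ≤ 2*x^3 := h2

lemma log_taylor4 {x : ℝ} (h : |x| ≤ 1/2) :
    |Real.log (1 - x) + (x + x^2/2 + x^3/3 + x^4/4)| ≤ 2 * |x|^5 := by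
  have hx : |x| < 1 := lt_of_le_of_lt h (by norm_num)
  have h5 := Real.abs_log_sub_add_sum_range_le hx 4
  rw [Finset.sum_range_succ, Finset.sum_range_succ, Finset.sum_range_succ,
    Finset.sum_range_succ, Finset.sum_range_zero] at h5
  push_cast at h5
  norm_num at h5
  have h2 : |x|^5/(1-|x|) ≤ 2*|x|^5 := by
    rw [div_le_iff₀ (by linarith)]
    nlinarith [pow_nonneg (abs_nonneg x) 5]
  calc |Real.log (1 - x) + (x + x^2/2 + x^3/3 + x^4/4)|
      = |x + x^2/2 + x^3/3 + x^4/4 + Real.log (1-x)| := by congr 1; ring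
    _ ≤ |x|^5/(1-|x|) := h5
    _ ≤ 2*|x|^5 := h2

set_option maxHeartbeats 2000000 in
lemma core (t : ℝ) (ht : 0 < t) (ht' : t ≤ 1/10) :
    |(-Real.log (1 - 2*t^2) + t * (Real.log (1 - 4*t^2 + 8*t^4)
      - Real.log (1 - Real.log (1 - 2*t^2) * t⁻¹ * (1 - t)))) + 20/3 * t^4|
    ≤ 200 * t^5 := by
  have h1t : (0:ℝ) ≤ 1 - t := by linarith
  -- power bounds
  have hp : ∀ k : ℕ, t^k ≤ (1/10)^k := fun k => pow_le_pow_left₀ ht.le ht' k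
  have hp1 := hp 1; have hp2 := hp 2; have hp3 := hp 3; have hp4 := hp 4
  have hp5 := hp 5; have hp6 := hp 6; have hp7 := hp 7; have hp8 := hp 8
  have hp9 := hp 9; have hp10 := hp 10; have hp11 := hp 11
  norm_num at hp1 hp2 hp3 hp4 hp5 hp6 hp7 hp8 hp9 hp10 hp11
  have hq : ∀ k : ℕ, 0 ≤ t^k := fun k => pow_nonneg ht.le k
  have hq1 := hq 1; have hq2 := hq 2; have hq3 := hq 3; have hq4 := hq 4
  have hq5 := hq 5; have hq6 := hq 6; have hq7 := hq 7; have hq8 := hq 8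
  have hq9 := hq 9; have hq10 := hq 10; have hq11 := hq 11
  norm_num at hq1 hq2 hq3 hq4 hq5 hq6 hq7 hq8 hq9 hq10 hq11
  set L := Real.log (1 - 2*t^2) with hLdef
  clear_value L
  have hA : |L + (2*t^2 + 2*t^4)| ≤ 16*t^6 := by
    have h := log_taylor2 (x := 2*t^2) (by positivity) (by nlinarith)
    calc |L + (2*t^2 + 2*t^4)| = |Real.log (1 - 2*t^2) + (2*t^2 + (2*t^2)^2/2)| := by
          rw [hLdef]; congr 1; ring
      _ ≤ 2*(2*t^2)^3 := h
      _ = 16*t^6 := by ring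
  have hLneg : L ≤ 0 := by
    rw [hLdef]; exact Real.log_nonpos (by nlinarith) (by nlinarith)
  set u := -L * (1 - t) / t with hudef
  clear_value u
  have hu0 : 0 ≤ u := by
    rw [hudef]; apply div_nonneg _ ht.le
    have : 0 ≤ -L := by linarith
    exact mul_nonneg this h1t
  have huP : |u - (2*t - 2*t^2 + 2*t^3 - 2*t^4)| ≤ 16*t^5 := by
    have he : u - (2*t - 2*t^2 + 2*t^3 - 2*t^4)
        = -(L + (2*t^2 + 2*t^4)) * (1 - t) / t := by
      rw [hudef]; field_simp; ring
    rw [he, abs_div, abs_mul, abs_of_pos ht, div_le_iff₀ ht]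
    have h1 : |(-(L + (2*t^2 + 2*t^4)))| ≤ 16*t^6 := by rwa [abs_neg]
    have h2 : |1 - t| ≤ 1 := by rw [abs_of_nonneg h1t]; linarith
    calc |(-(L + (2*t^2 + 2*t^4)))| * |1-t| ≤ 16*t^6 * 1 :=
          mul_le_mul h1 h2 (abs_nonneg _) (by positivity)
      _ = 16*t^5 * t := by ring
  have huPl := abs_le.mp huP
  have huub : u ≤ 1/4 := by nlinarith [huPl.2]
  -- B
  have hB : |Real.log (1 - 4*t^2 + 8*t^4) + 4*t^2| ≤ 161*t^6 := by
    have hx0 : (0:ℝ) ≤ 4*t^2 - 8*t^4 := by nlinarith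
    have hxu : 4*t^2 - 8*t^4 ≤ 4*t^2 := by nlinarith
    have h := log_taylor2 (x := 4*t^2 - 8*t^4) hx0 (by nlinarith)
    have he : (1:ℝ) - (4*t^2 - 8*t^4) = 1 - 4*t^2 + 8*t^4 := by ring
    rw [he] at h
    have h3 : 2*(4*t^2 - 8*t^4)^3 ≤ 128*t^6 := by
      have := pow_le_pow_left₀ hx0 hxu 3
      nlinarith [this]
    have hsplit : Real.log (1 - 4*t^2 + 8*t^4) + 4*t^2
        = (Real.log (1 - 4*t^2 + 8*t^4) + ((4*t^2 - 8*t^4) + (4*t^2-8*t^4)^2/2))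
          + (32*t^6 - 32*t^8) := by ring
    have h4 : |32*t^6 - 32*t^8| ≤ 33*t^6 := by
      rw [abs_le]; constructor <;> nlinarith
    calc |Real.log (1 - 4*t^2 + 8*t^4) + 4*t^2|
        ≤ |Real.log (1 - 4*t^2 + 8*t^4) + ((4*t^2 - 8*t^4) + (4*t^2-8*t^4)^2/2)|
          + |32*t^6 - 32*t^8| := by rw [hsplit]; exact abs_add_le _ _
      _ ≤ 128*t^6 + 33*t^6 := add_le_add (h.trans h3) h4
      _ = 161*t^6 := by ring
  -- C
  have hC : |Real.log (1 + u) - (2*t - 4*t^2 + 26/3*t^3 - 20*t^4)| ≤ 164*t^5 := by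
    set P : ℝ := 2*t - 2*t^2 + 2*t^3 - 2*t^4 with hPdef
    clear_value P
    have hP0 : 0 ≤ P := by
      nlinarith [mul_nonneg (mul_nonneg ht.le h1t) (by positivity : (0:ℝ) ≤ 1 + t^2)]
    have hPub : P ≤ 1/4 := by nlinarith [mul_nonneg hq2 (by nlinarith [sq_nonneg (2*t-1)] : (0:ℝ) ≤ 1 - t + t^2)]
    have hlog : |Real.log (1 + u) - (u - u^2/2 + u^3/3 - u^4/4)| ≤ 82*t^5 := by
      have habs : |(-u)| ≤ 1/2 := by rw [abs_neg, abs_of_nonneg hu0]; linarith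
      have h := log_taylor4 (x := -u) habs
      have he : (1:ℝ) - (-u) = 1 + u := by ring
      rw [he] at h
      have h1 : |Real.log (1 + u) - (u - u^2/2 + u^3/3 - u^4/4)|
          = |Real.log (1 + u) + (-u + (-u)^2/2 + (-u)^3/3 + (-u)^4/4)| := by
        congr 1; ring
      rw [h1]
      have hub' : u ≤ 21/10*t := by nlinarith [huPl.2]
      have h2 : 2*|(-u)|^5 ≤ 82*t^5 := by
        rw [abs_neg, abs_of_nonneg hu0]
        have h5 : u^5 ≤ (21/10*t)^5 := pow_le_pow_left₀ hu0 hub' 5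
        have h6 : (21/10*t)^5 = 4084101/100000 * t^5 := by ring
        rw [h6] at h5
        linarith
      linarith
    have hu2 : u^2 ≤ 1/16 := by
      have := pow_le_pow_left₀ hu0 huub 2; norm_num at this; linarith
    have hP2 : P^2 ≤ 1/16 := by
      have := pow_le_pow_left₀ hP0 hPub 2; norm_num at this; linarith
    have huP2 : u*P ≤ 1/16 := by
      have := mul_le_mul huub hPub hP0 (by norm_num : (0:ℝ) ≤ 1/4); norm_num at this; linarith
    have huPn : 0 ≤ u*P := mul_nonneg hu0 hP0
    have hu3 : u^3 ≤ 1/64 := by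
      have := pow_le_pow_left₀ hu0 huub 3; norm_num at this; linarith
    have hP3 : P^3 ≤ 1/64 := by
      have := pow_le_pow_left₀ hP0 hPub 3; norm_num at this; linarith
    have hu3n : 0 ≤ u^3 := by positivity
    have hP3n : 0 ≤ P^3 := by positivity
    have huuP : u^2*P ≤ 1/64 := by
      have := mul_le_mul hu2 hPub hP0 (by norm_num : (0:ℝ) ≤ 1/16); norm_num at this; linarith
    have huPP : u*P^2 ≤ 1/64 := by
      have := mul_le_mul huub hP2 (sq_nonneg P) (by norm_num : (0:ℝ) ≤ 1/4); norm_num at this; linarith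
    have huuPn : 0 ≤ u^2*P := mul_nonneg (sq_nonneg u) hP0
    have huPPn : 0 ≤ u*P^2 := mul_nonneg hu0 (sq_nonneg P)
    have hQ : |(u - u^2/2 + u^3/3 - u^4/4) - (P - P^2/2 + P^3/3 - P^4/4)| ≤ 32*t^5 := by
      have he : (u - u^2/2 + u^3/3 - u^4/4) - (P - P^2/2 + P^3/3 - P^4/4)
          = (u - P) * (1 - (u+P)/2 + (u^2+u*P+P^2)/3 - (u^3+u^2*P+u*P^2+P^3)/4) := by ring
      rw [he, abs_mul]
      have hbr : |1 - (u+P)/2 + (u^2+u*P+P^2)/3 - (u^3+u^2*P+u*P^2+P^3)/4| ≤ 2 := by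
        rw [abs_le]
        constructor <;> linarith [sq_nonneg u, sq_nonneg P]
      calc |u - P| * |1 - (u+P)/2 + (u^2+u*P+P^2)/3 - (u^3+u^2*P+u*P^2+P^3)/4|
          ≤ 16*t^5 * 2 := mul_le_mul huP hbr (abs_nonneg _) (by positivity)
        _ = 32*t^5 := by ring
    have hR : |(P - P^2/2 + P^3/3 - P^4/4) - (2*t - 4*t^2 + 26/3*t^3 - 20*t^4)| ≤ 50*t^5 := by
      have he : (P - P^2/2 + P^3/3 - P^4/4) - (2*t - 4*t^2 + 26/3*t^3 - 20*t^4)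
          = t^5 * (40 - 218/3*t + 116*t^2 - 158*t^3 + 560/3*t^4 - 192*t^5 + 168*t^6
            - 380/3*t^7 + 80*t^8 - 40*t^9 + 16*t^10 - 4*t^11) := by
        rw [hPdef]; ring
      rw [he, abs_mul, abs_of_nonneg hq5]
      have hS : |40 - 218/3*t + 116*t^2 - 158*t^3 + 560/3*t^4 - 192*t^5 + 168*t^6
          - 380/3*t^7 + 80*t^8 - 40*t^9 + 16*t^10 - 4*t^11| ≤ 50 := by
        rw [abs_le]; constructor <;> linarith
      calc t^5 * |40 - 218/3*t + 116*t^2 - 158*t^3 + 560/3*t^4 - 192*t^5 + 168*t^6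
          - 380/3*t^7 + 80*t^8 - 40*t^9 + 16*t^10 - 4*t^11| ≤ t^5 * 50 :=
            mul_le_mul_of_nonneg_left hS hq5
        _ = 50*t^5 := by ring
    have tri : ∀ a b c : ℝ, |a + b + c| ≤ |a| + |b| + |c| := fun a b c =>
      (abs_add_le _ _).trans (add_le_add_left (abs_add_le a b) _)
    have h9 := tri (Real.log (1 + u) - (u - u^2/2 + u^3/3 - u^4/4))
      ((u - u^2/2 + u^3/3 - u^4/4) - (P - P^2/2 + P^3/3 - P^4/4))
      ((P - P^2/2 + P^3/3 - P^4/4) - (2*t - 4*t^2 + 26/3*t^3 - 20*t^4))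
    have he9 : Real.log (1 + u) - (2*t - 4*t^2 + 26/3*t^3 - 20*t^4)
        = (Real.log (1 + u) - (u - u^2/2 + u^3/3 - u^4/4))
          + ((u - u^2/2 + u^3/3 - u^4/4) - (P - P^2/2 + P^3/3 - P^4/4))
          + ((P - P^2/2 + P^3/3 - P^4/4) - (2*t - 4*t^2 + 26/3*t^3 - 20*t^4)) := by ring
    rw [he9]
    linarith
  -- assemble
  have hD : 1 - L * t⁻¹ * (1 - t) = 1 + u := by
    rw [hudef]; field_simp; ring
  rw [hD]
  have he : (-L + t * (Real.log (1 - 4*t^2 + 8*t^4) - Real.log (1 + u))) + 20/3*t^4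
      = 20*t^5 + (-(L + (2*t^2 + 2*t^4)))
        + (t*(Real.log (1 - 4*t^2 + 8*t^4) + 4*t^2))
        + (-(t*(Real.log (1 + u) - (2*t - 4*t^2 + 26/3*t^3 - 20*t^4)))) := by ring
  rw [he]
  have step : ∀ a b c d : ℝ, |a + b + c + d| ≤ |a| + |b| + |c| + |d| := by
    intro a b c d
    calc |a + b + c + d| ≤ |a + b + c| + |d| := abs_add_le _ _
      _ ≤ (|a + b| + |c|) + |d| := by linarith [abs_add_le (a+b) c]
      _ ≤ ((|a| + |b|) + |c|) + |d| := by linarith [abs_add_le a b]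
  refine le_trans (step _ _ _ _) ?_
  rw [abs_neg, abs_neg, abs_mul t, abs_mul t, abs_of_pos ht,
    abs_of_nonneg (by positivity : (0:ℝ) ≤ 20*t^5)]
  have hBb : t*|Real.log (1 - 4*t^2 + 8*t^4) + 4*t^2| ≤ 161*t^7 := by
    calc t*|Real.log (1 - 4*t^2 + 8*t^4) + 4*t^2| ≤ t*(161*t^6) :=
          mul_le_mul_of_nonneg_left hB ht.le
      _ = 161*t^7 := by ring
  have hCb : t*|Real.log (1 + u) - (2*t - 4*t^2 + 26/3*t^3 - 20*t^4)| ≤ 164*t^6 := by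
    calc t*|Real.log (1 + u) - (2*t - 4*t^2 + 26/3*t^3 - 20*t^4)| ≤ t*(164*t^5) :=
          mul_le_mul_of_nonneg_left hC ht.le
      _ = 164*t^6 := by ring
  have h6 : t^6 ≤ t^5/10 := by nlinarith [mul_le_mul_of_nonneg_left ht' hq5]
  have h7 : t^7 ≤ t^5/100 := by nlinarith [mul_le_mul_of_nonneg_left hp2 hq5]
  linarith

lemma keyp (p : ℝ) (hp : 0 < p) (hp' : p < 1/100) :
    0 < (1 / (1 - p)) * ((1 - 2 * p * (1 - p)) /
        (1 - Real.log (1 - p) * Real.sqrt (2 / p) * (1 - Real.sqrt (p / 2))))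
        ^ (Real.sqrt (p / 2)) ∧
    |Real.log ((1 / (1 - p)) * ((1 - 2 * p * (1 - p)) /
        (1 - Real.log (1 - p) * Real.sqrt (2 / p) * (1 - Real.sqrt (p / 2))))
        ^ (Real.sqrt (p / 2))) + 5/3 * p^2| ≤ 200 * p ^ ((5:ℝ)/2) := by
  set t := Real.sqrt (p/2) with htdef
  have ht : 0 < t := Real.sqrt_pos.mpr (by linarith)
  have ht2 : t^2 = p/2 := Real.sq_sqrt (by linarith)
  have hpt : p = 2*t^2 := by rw [ht2]; ring
  have ht' : t ≤ 1/10 := by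
    nlinarith [ht2]
  have hs : Real.sqrt (2/p) = t⁻¹ := by
    rw [htdef, ← Real.sqrt_inv]
    congr 1
    rw [inv_div]
  have hq : (0:ℝ) < 1 - p := by linarith
  have hN : 1 - 2*p*(1-p) = 1 - 4*t^2 + 8*t^4 := by rw [hpt]; ring
  have hNpos : (0:ℝ) < 1 - 4*t^2 + 8*t^4 := by nlinarith
  have hL : Real.log (1-p) = Real.log (1 - 2*t^2) := by rw [hpt]
  have hLneg : Real.log (1 - 2*t^2) ≤ 0 :=
    Real.log_nonpos (by nlinarith) (by nlinarith)
  have hDpos : (0:ℝ) < 1 - Real.log (1 - 2*t^2) * t⁻¹ * (1 - t) := by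
    have h1 : 0 ≤ -Real.log (1 - 2*t^2) * t⁻¹ * (1 - t) := by
      apply mul_nonneg (mul_nonneg (by linarith) (by positivity)) (by linarith)
    nlinarith [h1]
  have hbase : (0:ℝ) < (1 - 4*t^2 + 8*t^4) / (1 - Real.log (1 - 2*t^2) * t⁻¹ * (1 - t)) :=
    div_pos hNpos hDpos
  rw [hN, hL, hs]
  have hgpos : 0 < (1 / (1 - p)) * ((1 - 4*t^2 + 8*t^4) /
      (1 - Real.log (1 - 2*t^2) * t⁻¹ * (1 - t))) ^ t :=
    mul_pos (by positivity) (Real.rpow_pos_of_pos hbase t)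
  refine ⟨hgpos, ?_⟩
  have hlogg : Real.log ((1 / (1 - p)) * ((1 - 4*t^2 + 8*t^4) /
      (1 - Real.log (1 - 2*t^2) * t⁻¹ * (1 - t))) ^ t)
      = -Real.log (1 - 2*t^2) + t * (Real.log (1 - 4*t^2 + 8*t^4)
        - Real.log (1 - Real.log (1 - 2*t^2) * t⁻¹ * (1 - t))) := by
    rw [Real.log_mul (by positivity) (Real.rpow_pos_of_pos hbase t).ne',
      Real.log_rpow hbase, Real.log_div hNpos.ne' hDpos.ne',
      one_div, Real.log_inv, hL]
  rw [hlogg]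
  have hp2 : 5/3 * p^2 = 20/3 * t^4 := by rw [hpt]; ring
  rw [hp2]
  have hc := core t ht ht'
  have ht5 : t^5 ≤ p ^ ((5:ℝ)/2) := by
    have h1 : t = (p/2) ^ ((1:ℝ)/2) := by
      rw [htdef, Real.sqrt_eq_rpow]
    have h2 : t^5 = (p/2) ^ ((5:ℝ)/2) := by
      rw [h1, ← Real.rpow_natCast ((p/2) ^ ((1:ℝ)/2)) 5, ← Real.rpow_mul (by linarith)]
      norm_num
    rw [h2]
    exact Real.rpow_le_rpow (by linarith) (by linarith) (by norm_num)
  linarith [hc, mul_le_mul_of_nonneg_left ht5 (by norm_num : (0:ℝ) ≤ 200), abs_nonneg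
    ((-Real.log (1 - 2*t^2) + t * (Real.log (1 - 4*t^2 + 8*t^4)
      - Real.log (1 - Real.log (1 - 2*t^2) * t⁻¹ * (1 - t)))) + 20/3 * t^4)]

theorem stmt_7 :
    ∀ gneg : ℝ → ℝ,
      (∀ p, gneg p = (1 / (1 - p)) * ((1 - 2 * p * (1 - p)) /
        (1 - Real.log (1 - p) * Real.sqrt (2 / p) * (1 - Real.sqrt (p / 2))))
        ^ (Real.sqrt (p / 2))) →
    (fun p : ℝ => Real.log (gneg p) - (-(5 / 3) * p ^ 2))
      =O[nhdsWithin 0 (Set.Ioi 0)] (fun p : ℝ => p ^ ((5:ℝ) / 2)) ∧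
    ∀ᶠ p : ℝ in nhdsWithin 0 (Set.Ioi 0), gneg p < 1 := by
  intro gneg hg
  constructor
  · rw [Asymptotics.isBigO_iff]
    refine ⟨200, ?_⟩
    filter_upwards [Ioo_mem_nhdsGT_of_mem (show (0:ℝ) ∈ Set.Ico 0 (1/100) by norm_num)]
      with p hpmem
    obtain ⟨hp0, hp1⟩ := hpmem
    obtain ⟨_, hkey⟩ := keyp p hp0 hp1
    rw [hg p] at *
    have h1 : Real.log ((1 / (1 - p)) * ((1 - 2 * p * (1 - p)) /
        (1 - Real.log (1 - p) * Real.sqrt (2 / p) * (1 - Real.sqrt (p / 2))))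
        ^ (Real.sqrt (p / 2))) - (-(5 / 3) * p ^ 2)
        = Real.log ((1 / (1 - p)) * ((1 - 2 * p * (1 - p)) /
        (1 - Real.log (1 - p) * Real.sqrt (2 / p) * (1 - Real.sqrt (p / 2))))
        ^ (Real.sqrt (p / 2))) + 5/3 * p^2 := by ring
    rw [Real.norm_eq_abs, Real.norm_eq_abs, h1]
    rw [abs_of_nonneg (Real.rpow_nonneg hp0.le _)]
    exact hkey
  · filter_upwards [Ioo_mem_nhdsGT_of_mem (show (0:ℝ) ∈ Set.Ico 0 (1/20000) by norm_num)]
      with p hpmem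
    obtain ⟨hp0, hp1⟩ := hpmem
    obtain ⟨hgpos, hkey⟩ := keyp p hp0 (by linarith)
    rw [hg p]
    apply (Real.log_neg_iff hgpos).mp
    have hup := (abs_le.mp hkey).2
    have hsplit : p ^ ((5:ℝ)/2) = p^2 * Real.sqrt p := by
      rw [Real.sqrt_eq_rpow, ← Real.rpow_natCast p 2, ← Real.rpow_add hp0]
      norm_num
    have hsq : Real.sqrt p < 1/140 := by
      rw [show (1:ℝ)/140 = Real.sqrt ((1/140)^2) by rw [Real.sqrt_sq (by norm_num)]]
      apply Real.sqrt_lt_sqrt hp0.le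
      nlinarith
    have hs0 : 0 ≤ Real.sqrt p := Real.sqrt_nonneg p
    have h2 : 200 * p ^ ((5:ℝ)/2) < 10/7 * p^2 := by
      rw [hsplit]
      have hp2p : (0:ℝ) < p^2 := by positivity
      have h3 := mul_lt_mul_of_pos_left hsq hp2p
      linarith
    have : Real.log ((1 / (1 - p)) * ((1 - 2 * p * (1 - p)) /
        (1 - Real.log (1 - p) * Real.sqrt (2 / p) * (1 - Real.sqrt (p / 2))))
        ^ (Real.sqrt (p / 2))) < 0 := by nlinarith [sq_nonneg p]
    exact this
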